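/- Define g : ℝ → ℝ by g(p) = (-3 + 3e^{-1}) p³ + (-5 + 4e^{-1}) p² - p + 1 for p ∈ (-1, 0), and g(p) = e^{-|p|} for p ∉ (-1, 0). Then g is continuously differentiable on ℝ (g ∈ C¹(ℝ)), with g(0) = 1, g'(0) = -1, g(-1) = e^{-1}, and g'(-1) = e^{-1}. -/

import Mathlib

open Real Set Filter

/-- The smooth (`C¹`) initialisation of the Schrödingerised equation: the cubic
Hermite interpolant glued to `e^{-|p|}` on `(-1,0)` produces a continuously
differentiable profile matching `e^{-|p|}` outside `(-1,0)`. -/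
theorem smooth_initialisation_C1
    (g : ℝ → ℝ)
    (hg_in : ∀ p ∈ Set.Ioo (-1 : ℝ) 0,
      g p = (-3 + 3 * Real.exp (-1)) * p ^ 3 + (-5 + 4 * Real.exp (-1)) * p ^ 2 - p + 1)
    (hg_out : ∀ p : ℝ, p ∉ Set.Ioo (-1 : ℝ) 0 → g p = Real.exp (-|p|)) :
    ContDiff ℝ 1 g ∧ g 0 = 1 ∧ deriv g 0 = -1 ∧
      g (-1) = Real.exp (-1) ∧ deriv g (-1) = Real.exp (-1) := by
  set c3 : ℝ := -3 + 3 * Real.exp (-1) with hc3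
  set c2 : ℝ := -5 + 4 * Real.exp (-1) with hc2
  set Q : ℝ → ℝ := fun p => c3 * p ^ 3 + c2 * p ^ 2 - p + 1 with hQdef
  set G : ℝ → ℝ := fun x =>
    if x ≤ -1 then Real.exp x
    else if x ≤ 0 then 3 * c3 * x ^ 2 + 2 * c2 * x - 1
    else -Real.exp (-x) with hGdef
  -- basic values
  have hg0 : g 0 = 1 := by
    rw [hg_out 0 (by simp)]; simp
  have hgm1 : g (-1) = Real.exp (-1) := by
    rw [hg_out (-1) (by simp)]; norm_num
  have hQm1 : Q (-1) = Real.exp (-1) := by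
    simp only [hQdef, hc3, hc2]; ring
  have hQ0 : Q 0 = 1 := by simp [hQdef]
  -- g agrees with the cubic on [-1,0]
  have hgQ : ∀ p ∈ Icc (-1 : ℝ) 0, g p = Q p := by
    intro p hp
    rcases eq_or_lt_of_le hp.1 with h1 | h1
    · rw [← h1, hgm1, hQm1]
    rcases eq_or_lt_of_le hp.2 with h2 | h2
    · rw [h2, hg0, hQ0]
    · exact hg_in p ⟨h1, h2⟩
  have hgexpL : ∀ p ≤ (-1 : ℝ), g p = Real.exp p := by
    intro p hp
    rw [hg_out p (by intro h; exact absurd h.1 (not_lt.mpr hp)),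
      abs_of_nonpos (by linarith), neg_neg]
  have hgexpR : ∀ p : ℝ, 0 ≤ p → g p = Real.exp (-p) := by
    intro p hp
    rw [hg_out p (by intro h; exact absurd h.2 (not_lt.mpr hp)),
      abs_of_nonneg hp]
  -- derivative of the cubic
  have hQ' : ∀ x : ℝ, HasDerivAt Q (3 * c3 * x ^ 2 + 2 * c2 * x - 1) x := by
    intro x
    have h3 : HasDerivAt (fun p : ℝ => p ^ 3) (3 * x ^ 2) x := by
      simpa using hasDerivAt_pow 3 x
    have h2 : HasDerivAt (fun p : ℝ => p ^ 2) (2 * x) x := by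
      simpa using hasDerivAt_pow 2 x
    have key := (((h3.const_mul c3).add (h2.const_mul c2)).sub (hasDerivAt_id x)).add_const 1
    have heq : 3 * c3 * x ^ 2 + 2 * c2 * x - 1 = c3 * (3 * x ^ 2) + c2 * (2 * x) - 1 := by ring
    rw [hQdef, heq]
    exact key
  -- derivative of exp(-x)
  have hE' : ∀ x : ℝ, HasDerivAt (fun p : ℝ => Real.exp (-p)) (-Real.exp (-x)) x := by
    intro x
    have := (Real.hasDerivAt_exp (-x)).comp x (hasDerivAt_neg x)
    simpa [mul_comm, Function.comp_def] using this
  -- g is differentiable everywhere with derivative G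
  have hD : ∀ x : ℝ, HasDerivAt g (G x) x := by
    intro x
    rcases lt_trichotomy x (-1) with hx | hx | hx
    · -- x < -1
      have hGx : G x = Real.exp x := by simp [hGdef, le_of_lt hx]
      rw [hGx]
      refine (Real.hasDerivAt_exp x).congr_of_eventuallyEq ?_
      filter_upwards [Iio_mem_nhds hx] with y hy
      exact hgexpL y (le_of_lt hy)
    · -- x = -1 : glue point
      subst hx
      have hL : HasDerivWithinAt g (Real.exp (-1)) (Iic (-1)) (-1) := by
        refine ((Real.hasDerivAt_exp (-1)).hasDerivWithinAt).congr ?_ (hgexpL _ le_rfl)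
        intro y hy; exact hgexpL y hy
      have hR : HasDerivWithinAt g (Real.exp (-1)) (Ici (-1)) (-1) := by
        have hval : 3 * c3 * (-1 : ℝ) ^ 2 + 2 * c2 * (-1) - 1 = Real.exp (-1) := by
          rw [hc3, hc2]; ring
        have h := (hQ' (-1)).hasDerivWithinAt (s := Ici (-1 : ℝ))
        rw [hval] at h
        refine h.congr_of_eventuallyEq ?_ (by rw [hgm1, hQm1])
        filter_upwards [mem_nhdsWithin_of_mem_nhds (Iio_mem_nhds (by norm_num : (-1 : ℝ) < 0)),
          self_mem_nhdsWithin] with y h1 h2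
        exact hgQ y ⟨h2, le_of_lt h1⟩
      have := hL.union hR
      rw [Iic_union_Ici] at this
      have hGx : G (-1) = Real.exp (-1) := by simp [hGdef]
      rw [hGx]
      exact this.hasDerivAt (by simp)
    rcases lt_trichotomy x 0 with hx0 | hx0 | hx0
    · -- -1 < x < 0
      have hGx : G x = 3 * c3 * x ^ 2 + 2 * c2 * x - 1 := by
        simp [hGdef, not_le.mpr hx, le_of_lt hx0]
      rw [hGx]
      refine (hQ' x).congr_of_eventuallyEq ?_
      filter_upwards [Ioo_mem_nhds hx hx0] with y hy
      exact hg_in y hy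
    · -- x = 0 : glue point
      subst hx0
      have hL : HasDerivWithinAt g (-1 : ℝ) (Iic 0) 0 := by
        have hval : 3 * c3 * (0 : ℝ) ^ 2 + 2 * c2 * 0 - 1 = -1 := by ring
        have h := (hQ' 0).hasDerivWithinAt (s := Iic (0 : ℝ))
        rw [hval] at h
        refine h.congr_of_eventuallyEq ?_ (by rw [hg0, hQ0])
        filter_upwards [mem_nhdsWithin_of_mem_nhds (Ioi_mem_nhds (by norm_num : (-1 : ℝ) < 0)),
          self_mem_nhdsWithin] with y h1 h2
        exact hgQ y ⟨le_of_lt h1, h2⟩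
      have hR : HasDerivWithinAt g (-1 : ℝ) (Ici 0) 0 := by
        have h := (hE' 0).hasDerivWithinAt (s := Ici (0 : ℝ))
        have hval : -Real.exp (-(0 : ℝ)) = -1 := by simp
        rw [hval] at h
        refine h.congr ?_ (by rw [hgexpR 0 le_rfl])
        intro y hy; exact hgexpR y hy
      have := hL.union hR
      rw [Iic_union_Ici] at this
      have hGx : G 0 = -1 := by norm_num [hGdef]
      rw [hGx]
      exact this.hasDerivAt (by simp)
    · -- 0 < x
      have hGx : G x = -Real.exp (-x) := by
        simp [hGdef, not_le.mpr hx0, (by linarith : ¬ x ≤ -1)]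
      rw [hGx]
      refine (hE' x).congr_of_eventuallyEq ?_
      filter_upwards [Ioi_mem_nhds hx0] with y hy
      exact hgexpR y (le_of_lt hy)
  have hderiv : deriv g = G := funext fun x => (hD x).deriv
  -- continuity of G
  have hGcont : Continuous G := by
    rw [hGdef]
    apply Continuous.if_le
    · exact Real.continuous_exp
    · apply Continuous.if_le
      · fun_prop
      · fun_prop
      · exact continuous_id
      · exact continuous_const
      · intro x hx
        rw [hx]; simp
    · exact continuous_id
    · exact continuous_const
    · intro x hx
      rw [hx]
      rw [if_pos (by norm_num : (-1 : ℝ) ≤ 0)]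
      rw [hc3, hc2]; ring
  refine ⟨?_, hg0, ?_, hgm1, ?_⟩
  · exact contDiff_one_iff_deriv.mpr ⟨fun x => (hD x).differentiableAt, by rw [hderiv]; exact hGcont⟩
  · rw [hderiv]; norm_num [hGdef]
  · rw [hderiv]; simp [hGdef]
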